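/- Let a > 0, b > 1/2, ε > 0, and g(x) = x / ((ε + x²)·(1 + a·x^{2b})). Then g'(x) = -( a·x^{2b}·((2b+1)·x² + ε·(2b-1)) + x² - ε ) / ( (x² + ε)²·(a·x^{2b} + 1)² ), and the numerator N(x) = a·x^{2b}·((2b+1)·x² + ε·(2b-1)) + x² - ε of -g'(x) is strictly increasing on (0, ∞) with N(x) < 0 for x sufficiently small and N(x) → ∞ as x → ∞. -/

import Mathlib

open Real Filter Set Topology

lemma umap_deriv_aux (a b ε : ℝ) (ha : 0 < a) (hb : 1/2 < b) (hε : 0 < ε)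
    (x : ℝ) (hx : 0 < x) :
    HasDerivAt (fun y : ℝ => y / ((ε + y^2) * (1 + a * y ^ (2*b))))
      (-(a * x ^ (2*b) * ((2*b + 1) * x^2 + ε * (2*b - 1)) + x^2 - ε) /
        ((x^2 + ε)^2 * (a * x ^ (2*b) + 1)^2)) x := by
  have hxp : (0:ℝ) < x ^ (2*b) := Real.rpow_pos_of_pos hx _
  have h1 : HasDerivAt (fun y : ℝ => ε + y^2) (2*x) x := by
    have := (hasDerivAt_pow 2 x).const_add ε
    simpa using this
  have h2 : HasDerivAt (fun y : ℝ => y ^ (2*b)) (2*b * x ^ (2*b - 1)) x := by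
    have := Real.hasDerivAt_rpow_const (x := x) (p := 2*b) (Or.inl hx.ne')
    simpa [mul_comm] using this
  have h3 : HasDerivAt (fun y : ℝ => 1 + a * y ^ (2*b)) (a * (2*b * x ^ (2*b - 1))) x :=
    (h2.const_mul a).const_add 1
  have hD := h1.mul h3
  have hDne : (ε + x^2) * (1 + a * x ^ (2*b)) ≠ 0 := by positivity
  have hdiv := (hasDerivAt_id x).div hD hDne
  convert hdiv using 1
  · rfl
  · rfl
  · rfl
  simp only [Pi.mul_apply, id]
  have hpow : x ^ (2*b - 1) = x ^ (2*b) / x := by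
    rw [Real.rpow_sub hx, Real.rpow_one]
  rw [hpow]
  field_simp
  ring

theorem umap_repulsive_derivative (a b ε : ℝ) (ha : 0 < a) (hb : 1/2 < b) (hε : 0 < ε)
    (g N : ℝ → ℝ)
    (hg : ∀ x > 0, g x = x / ((ε + x^2) * (1 + a * x ^ (2*b))))
    (hN : ∀ x > 0, N x = a * x ^ (2*b) * ((2*b + 1) * x^2 + ε * (2*b - 1)) + x^2 - ε) :
    (∀ x > 0, HasDerivAt g (-(N x) / ((x^2 + ε)^2 * (a * x ^ (2*b) + 1)^2)) x) ∧
    StrictMonoOn N (Ioi 0) ∧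
    (∃ δ > 0, ∀ x ∈ Ioo (0:ℝ) δ, N x < 0) ∧
    Tendsto N atTop atTop := by
  have hb1 : (1:ℝ) < 2*b := by linarith
  refine ⟨?_, ?_, ?_, ?_⟩
  · intro x hx
    rw [hN x hx]
    refine (umap_deriv_aux a b ε ha hb hε x hx).congr_of_eventuallyEq ?_
    filter_upwards [isOpen_Ioi.eventually_mem hx] with y hy
    exact hg y hy
  · intro x hx y hy hxy
    rw [hN x hx, hN y hy]
    have hx' : (0:ℝ) < x := hx
    have hy' : (0:ℝ) < y := hy
    have hpow : x ^ (2*b) < y ^ (2*b) :=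
      Real.rpow_lt_rpow hx'.le hxy (by linarith)
    have hsq : x^2 < y^2 := by nlinarith
    have hfac : 0 < (2*b + 1) * x^2 + ε * (2*b - 1) := by nlinarith
    have hfac2 : (2*b + 1) * x^2 + ε * (2*b - 1) < (2*b + 1) * y^2 + ε * (2*b - 1) := by
      nlinarith
    have hstep : a * x ^ (2*b) * ((2*b + 1) * x^2 + ε * (2*b - 1)) <
        a * y ^ (2*b) * ((2*b + 1) * y^2 + ε * (2*b - 1)) := by
      have h1 : 0 < a * x ^ (2*b) := by positivity
      have h2 : a * x ^ (2*b) < a * y ^ (2*b) := by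
        exact mul_lt_mul_of_pos_left hpow ha
      nlinarith
    linarith
  · have htend : Tendsto (fun x : ℝ =>
        a * x ^ (2*b) * ((2*b + 1) * x^2 + ε * (2*b - 1)) + x^2 - ε) (𝓝[>] 0) (𝓝 (-ε)) := by
      have hc : ContinuousAt (fun x : ℝ =>
          a * x ^ (2*b) * ((2*b + 1) * x^2 + ε * (2*b - 1)) + x^2 - ε) 0 := by
        have hr : ContinuousAt (fun x : ℝ => x ^ (2*b)) 0 :=
          Real.continuousAt_rpow_const 0 (2*b) (Or.inr (by linarith))
        fun_prop
      have := hc.continuousWithinAt (s := Ioi 0)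
      rw [ContinuousWithinAt] at this
      simpa [Real.zero_rpow (by linarith : 2*b ≠ 0)] using this
    have hev : ∀ᶠ x in 𝓝[>] (0:ℝ), N x < 0 := by
      have hlt : ∀ᶠ x in 𝓝[>] (0:ℝ),
          a * x ^ (2*b) * ((2*b + 1) * x^2 + ε * (2*b - 1)) + x^2 - ε < 0 :=
        htend.eventually (Filter.Tendsto.eventually_lt_const (by linarith) tendsto_id) |>.mono
          (fun x hx => hx)
      filter_upwards [hlt, self_mem_nhdsWithin] with x h1 h2
      rw [hN x h2]; exact h1
    rcases (nhdsGT_basis (0:ℝ)).eventually_iff.mp hev with ⟨δ, hδ, h⟩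
    exact ⟨δ, hδ, fun x hx => h hx⟩
  · have hge : ∀ᶠ x in atTop, x^2 - ε ≤ N x := by
      filter_upwards [eventually_gt_atTop (0:ℝ)] with x hx
      rw [hN x hx]
      have hp := Real.rpow_pos_of_pos hx (2*b)
      have hfac : 0 < (2*b + 1) * x^2 + ε * (2*b - 1) := by nlinarith
      have : 0 ≤ a * x ^ (2*b) * ((2*b + 1) * x^2 + ε * (2*b - 1)) := by positivity
      linarith
    have h2 : Tendsto (fun x : ℝ => x^2 - ε) atTop atTop := by
      have := tendsto_atTop_add_const_right atTop (-ε)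
        (tendsto_pow_atTop (two_ne_zero) : Tendsto (fun x : ℝ => x^2) atTop atTop)
      simpa [sub_eq_add_neg] using this
    exact tendsto_atTop_mono' _ hge h2
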